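/- Let p be a prime, G a group, and H a normal subgroup of G of index a power of p. If U is a normal subgroup of H of index a power of p in H, then the intersection V = ⋂_{g ∈ G} gUg⁻¹ is a normal subgroup of G, V ≤ U, and the index of V in G is a power of p. -/

import Mathlib

section Aux

variable {G : Type*} [Group G]

lemma mapConj_eq_self (S : Subgroup G) (g : G)
    (h1 : ∀ s ∈ S, g * s * g⁻¹ ∈ S) (h2 : ∀ s ∈ S, g⁻¹ * s * g ∈ S) :
    S.map (MulAut.conj g).toMonoidHom = S := by
  apply le_antisymm
  · rintro x ⟨s, hs, rfl⟩
    exact h1 s hs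
  · intro s hs
    refine ⟨g⁻¹ * s * g, h2 s hs, ?_⟩
    simp [MulAut.conj_apply, mul_assoc]

lemma mapConj_normal (H : Subgroup G) [H.Normal] (g : G) :
    H.map (MulAut.conj g).toMonoidHom = H :=
  mapConj_eq_self H g (fun s hs => Subgroup.Normal.conj_mem ‹H.Normal› s hs g)
    (fun s hs => by simpa using Subgroup.Normal.conj_mem ‹H.Normal› s hs g⁻¹)

end Aux

theorem stmt1 (p : ℕ) (hp : p.Prime) (G : Type*) [Group G] (H : Subgroup G)
    [H.Normal] (hHindex : ∃ n : ℕ, H.index = p ^ n)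
    (U : Subgroup G) (hUH : U ≤ H)
    (hUnormal : ∀ h ∈ H, ∀ u ∈ U, h * u * h⁻¹ ∈ U)
    (hUindex : ∃ m : ℕ, U.relIndex H = p ^ m) :
    (⨅ g : G, U.map (MulAut.conj g).toMonoidHom).Normal ∧
    (⨅ g : G, U.map (MulAut.conj g).toMonoidHom) ≤ U ∧
    ∃ m : ℕ, (⨅ g : G, U.map (MulAut.conj g).toMonoidHom).index = p ^ m := by
  obtain ⟨n, hn⟩ := hHindex
  obtain ⟨m, hm⟩ := hUindex
  set f : G → Subgroup G := fun g => U.map (MulAut.conj g).toMonoidHom with hf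
  set V : Subgroup G := ⨅ g : G, f g with hV
  -- conjugation by an element of H fixes U
  have hA : ∀ h ∈ H, f h = U := by
    intro h hh
    exact mapConj_eq_self U h (fun s hs => hUnormal h hh s hs)
      (fun s hs => by simpa using hUnormal h⁻¹ (inv_mem hh) s hs)
  -- f is constant on left cosets of H
  have hconst : ∀ g h, h ∈ H → f (g * h) = f g := by
    intro g h hh
    have : (MulAut.conj (g * h)).toMonoidHom
        = ((MulAut.conj g).toMonoidHom).comp ((MulAut.conj h).toMonoidHom) := by
      ext x; simp [MulAut.conj_apply, mul_assoc]
    rw [hf]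
    simp only [this, ← Subgroup.map_map]
    rw [show U.map (MulAut.conj h).toMonoidHom = U from hA h hh]
  -- V is normal
  have hnormal : V.Normal := by
    constructor
    intro x hx g
    rw [hV, Subgroup.mem_iInf] at hx ⊢
    intro k
    obtain ⟨u, hu, hux⟩ := hx (g⁻¹ * k)
    refine ⟨u, hu, ?_⟩
    have hx' : g⁻¹ * k * u * (g⁻¹ * k)⁻¹ = x := hux
    show k * u * k⁻¹ = g * x * g⁻¹
    rw [← hx']; group
  -- V ≤ U
  have hle : V ≤ U := le_trans (iInf_le f 1) (le_of_eq (hA 1 H.one_mem))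
  refine ⟨hnormal, hle, ?_⟩
  have hleH : V ≤ H := hle.trans hUH
  -- each conjugate is ≤ H, has relindex p^m in H, and is "normal in H"
  have hfH : ∀ g, f g ≤ H := by
    intro g
    rw [hf]
    calc U.map (MulAut.conj g).toMonoidHom ≤ H.map (MulAut.conj g).toMonoidHom :=
          Subgroup.map_mono hUH
      _ = H := mapConj_normal H g
  have hsymm : ∀ g : G, (MulAut.conj g).symm = MulAut.conj g⁻¹ := by
    intro g; ext x; simp
  have hrel : ∀ g, (f g).relIndex H = p ^ m := by
    intro g
    show (U.map (MulAut.conj g).toMonoidHom).relIndex H = p ^ m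
    rw [Subgroup.map_equiv_eq_comap_symm', Subgroup.relIndex_comap, hsymm, mapConj_normal H g⁻¹,
      hm]
  have hfnorm : ∀ g, ∀ h ∈ H, ∀ x ∈ f g, h * x * h⁻¹ ∈ f g := by
    rintro g h hh x ⟨u, hu, rfl⟩
    refine ⟨(g⁻¹ * h * g) * u * (g⁻¹ * h * g)⁻¹,
      hUnormal _ (Subgroup.Normal.conj_mem' ‹H.Normal› h hh g) u hu, ?_⟩
    simp only [MulEquiv.coe_toMonoidHom, MulAut.conj_apply]
    group
  -- pass to the finite quotient G ⧸ H
  have hfin : Finite (G ⧸ H) := by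
    rw [Subgroup.index_eq_card] at hn
    exact (Nat.card_ne_zero.mp (hn ▸ pow_ne_zero n hp.ne_zero)).2
  set K : G ⧸ H → Subgroup G := fun q => f q.out with hK
  have hVK : V = ⨅ q : G ⧸ H, K q := by
    apply le_antisymm
    · exact le_iInf fun q => iInf_le f q.out
    · refine le_iInf fun g => ?_
      obtain ⟨⟨h, hh⟩, he⟩ := QuotientGroup.mk_out_eq_mul H g
      have : K (QuotientGroup.mk g) = f g := by
        rw [hK]; dsimp only; rw [he, hconst g h hh]
      exact le_trans (iInf_le _ (QuotientGroup.mk g)) (le_of_eq this)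
  haveI : ∀ q : G ⧸ H, ((K q).subgroupOf H).Normal := by
    intro q
    constructor
    rintro ⟨x, hxH⟩ hx ⟨h, hhH⟩
    rw [Subgroup.mem_subgroupOf] at hx ⊢
    exact hfnorm _ h hhH x hx
  -- the product homomorphism
  set φ : H →* (∀ q : G ⧸ H, H ⧸ (K q).subgroupOf H) :=
    Pi.monoidHom (fun q => QuotientGroup.mk' ((K q).subgroupOf H)) with hφ
  have hker : φ.ker = V.subgroupOf H := by
    ext x
    simp only [hφ, MonoidHom.mem_ker, funext_iff, Pi.monoidHom, Pi.monoidHom_apply, Pi.one_apply,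
      QuotientGroup.mk'_apply, QuotientGroup.eq_one_iff, Subgroup.mem_subgroupOf, hVK,
      Subgroup.mem_iInf]
  have hcard : (V.subgroupOf H).index = Nat.card φ.range := by
    rw [← hker, Subgroup.index_ker]
  have hdvd : V.relIndex H ∣ p ^ (m * Nat.card (G ⧸ H)) := by
    have h1 : Nat.card (∀ q : G ⧸ H, H ⧸ (K q).subgroupOf H) = p ^ (m * Nat.card (G ⧸ H)) := by
      haveI := Fintype.ofFinite (G ⧸ H)
      have hq : ∀ q : G ⧸ H, Nat.card (H ⧸ (K q).subgroupOf H) = p ^ m := by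
        intro q
        rw [← Subgroup.index_eq_card]
        exact hrel q.out
      rw [Nat.card_pi, Finset.prod_congr rfl (fun q _ => hq q), Finset.prod_const,
        Finset.card_univ, ← pow_mul, Nat.card_eq_fintype_card]
    rw [Subgroup.relIndex, hcard, ← h1]
    exact Subgroup.card_subgroup_dvd_card φ.range
  obtain ⟨j, _, hj⟩ := (Nat.dvd_prime_pow hp).mp hdvd
  refine ⟨j + n, ?_⟩
  rw [← Subgroup.relIndex_mul_index hleH, hj, hn, pow_add]
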